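/- Let $F$ be a $K_{k,k}$-free bipartite graph with parts $B$ and $Q$ where $|Q| = q$. Suppose there exists $x \in B$ adjacent to every vertex of $Q$, and for every $T \subseteq Q$ with $|T| = d$, the set of common neighbors $N(T)$ satisfies $|N(T)| \ge q$. If $q$ is sufficiently large compared to $d$ and $k$ (with $k \ge d \ge 2$), then there exists $Z \subseteq Q$ with $|Z| = d+1$ such that $Z$ is shattered by the family $\{N(b) : b \in B\}$. -/

import Mathlib

open Finset

/-- Neighborhood in `A` of a vertex `b` of the second part. -/
def nbrA {α β : Type} [DecidableEq α] (E : α → β → Prop) [∀ a b, Decidable (E a b)]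
    (A : Finset α) (b : β) : Finset α := A.filter (fun a => E a b)

/-- Neighborhood in `B` of a vertex `a` of the first part. -/
def nbrB {α β : Type} [DecidableEq β] (E : α → β → Prop) [∀ a b, Decidable (E a b)]
    (B : Finset β) (a : α) : Finset β := B.filter (fun b => E a b)

/-- Common neighborhood in `B` of a set `T` of vertices of the first part. -/
def commonNbr {α β : Type} [DecidableEq β] (E : α → β → Prop) [∀ a b, Decidable (E a b)]
    (B : Finset β) (T : Finset α) : Finset β := B.filter (fun b => ∀ a ∈ T, E a b)

/-- Number of edges of the bipartite graph with parts `A`, `B` and adjacency `E`. -/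
def edgeCount {α β : Type} (E : α → β → Prop) [∀ a b, Decidable (E a b)]
    (A : Finset α) (B : Finset β) : ℕ := ((A ×ˢ B).filter (fun p => E p.1 p.2)).card

/-- `K_{k,k}`-freeness of the bipartite graph with parts `A`, `B` and adjacency `E`. -/
def KFree {α β : Type} (E : α → β → Prop) (A : Finset α) (B : Finset β) (k : ℕ) : Prop :=
  ¬ ∃ S ⊆ A, ∃ T ⊆ B, S.card = k ∧ T.card = k ∧ ∀ a ∈ S, ∀ b ∈ T, E a b

/-- `Z ⊆ A` is shattered by the neighborhoods of the vertices of `B`. -/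
def Shatters {α β : Type} [DecidableEq α] (E : α → β → Prop) [∀ a b, Decidable (E a b)]
    (A : Finset α) (B : Finset β) (Z : Finset α) : Prop :=
  ∀ S ⊆ Z, ∃ b ∈ B, nbrA E A b ∩ Z = S

/-- The VC-dimension of the bipartite graph `(A,B,E)` with respect to `A` is at most `d`. -/
def VCdimLE {α β : Type} [DecidableEq α] (E : α → β → Prop) [∀ a b, Decidable (E a b)]
    (A : Finset α) (B : Finset β) (d : ℕ) : Prop :=
  ∀ Z ⊆ A, Shatters E A B Z → Z.card ≤ d

private lemma aux_pow_le_descFactorial (n : ℕ) : ∀ m : ℕ, (n + 1 - m) ^ m ≤ n.descFactorial m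
  | 0 => le_refl 1
  | (m + 1) => by
      rw [Nat.descFactorial_succ]
      have h1 : n + 1 - (m + 1) = n - m := by omega
      rw [h1, pow_succ, Nat.mul_comm]
      exact Nat.mul_le_mul_left _ ((Nat.pow_le_pow_left (by omega) m).trans
        (aux_pow_le_descFactorial n m))

/-- If `F` is `K_{k,k}`-free with parts `B` and `Q`, `|Q| = q`, some `x ∈ B` is adjacent to
all of `Q`, and every `d`-subset of `Q` has at least `q` common neighbors, then for `q`
sufficiently large (in terms of `d` and `k`) some `(d+1)`-subset of `Q` is shattered. -/
theorem stmt_4 (k d : ℕ) (hd : 2 ≤ d) (hk : d ≤ k) :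
    ∃ q₀ : ℕ, ∀ q ≥ q₀,
      ∀ (α β : Type) [DecidableEq α] [DecidableEq β]
        (E : α → β → Prop) [∀ a b, Decidable (E a b)] (Q : Finset α) (B : Finset β)
        (x : β), x ∈ B → Q.card = q → KFree E Q B k →
        (∀ a ∈ Q, E a x) →
        (∀ T ⊆ Q, T.card = d → q ≤ (commonNbr E B T).card) →
        ∃ Z ⊆ Q, Z.card = d + 1 ∧ Shatters E Q B Z := by
  classical
  set c : ℕ := (d + 1) * (Nat.factorial (d + 1)) * 2 ^ (d + 2) with hc_def
  have hcpos : 0 < c := by positivity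
  set r : ℕ := 2 * c * k with hr_def
  set K₂ : ℕ := (k - 1) * (r.choose k) with hK_def
  refine ⟨c * (2 * K₂ + 2) + r + 2 * d + 2 * k + 2, fun q hq α β _ _ E _ Q B x hxB hQ hfree
    hxadj hcomm => ?_⟩
  have hq1 : c * (2 * K₂ + 2) ≤ q := by omega
  have hq2 : r ≤ q := by omega
  have hq3 : 2 * d + 2 ≤ q := by omega
  have hqpos : 0 < q := by omega
  set t : ℕ := q / c with ht_def
  have hct : c * t ≤ q := by
    rw [ht_def, Nat.mul_comm]; exact Nat.div_mul_le_self q c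
  have htK : 2 * K₂ + 2 ≤ t := by
    rw [ht_def, Nat.le_div_iff_mul_le hcpos, Nat.mul_comm]; exact hq1
  have hqct : q ≤ c * t + c := by
    rw [ht_def]
    have h1 := Nat.div_add_mod q c
    have h2 := Nat.mod_lt q hcpos
    omega
  set L : Finset β := B.filter (fun b => t < (nbrA E Q b).card) with hL_def
  -- Step 1: L is small
  have hLr : L.card < r := by
    by_contra hcon
    push_neg at hcon
    obtain ⟨L', hL'L, hL'card⟩ := Finset.exists_subset_card_eq hcon
    have hswap : ∑ b ∈ L', (nbrA E Q b).card
        = ∑ a ∈ Q, (L'.filter (fun b => E a b)).card := by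
      simp only [nbrA, Finset.card_filter]
      rw [Finset.sum_comm]
    have hlow : (t + 1) * r ≤ ∑ b ∈ L', (nbrA E Q b).card := by
      calc (t + 1) * r = ∑ _b ∈ L', (t + 1) := by
            rw [Finset.sum_const, hL'card, smul_eq_mul, Nat.mul_comm]
        _ ≤ _ := Finset.sum_le_sum fun b hb => by
            have hbL := hL'L hb
            rw [hL_def, Finset.mem_filter] at hbL
            omega
    set G : Finset α := Q.filter (fun a => k ≤ (L'.filter (fun b => E a b)).card) with hG_def
    have hup : ∑ a ∈ Q, (L'.filter (fun b => E a b)).card ≤ G.card * r + q * (k - 1) := by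
      rw [← Finset.sum_filter_add_sum_filter_not Q (fun a => k ≤ (L'.filter (fun b => E a b)).card)]
      gcongr ?_ + ?_
      · calc ∑ a ∈ G, (L'.filter (fun b => E a b)).card ≤ ∑ _a ∈ G, r :=
              Finset.sum_le_sum fun a _ => by
                calc (L'.filter (fun b => E a b)).card ≤ L'.card :=
                      Finset.card_le_card (Finset.filter_subset _ _)
                  _ = r := hL'card
          _ = G.card * r := by rw [Finset.sum_const, smul_eq_mul]
      · calc ∑ a ∈ Q.filter (fun a => ¬ k ≤ (L'.filter (fun b => E a b)).card),
              (L'.filter (fun b => E a b)).card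
            ≤ ∑ _a ∈ Q.filter (fun a => ¬ k ≤ (L'.filter (fun b => E a b)).card), (k - 1) :=
              Finset.sum_le_sum fun a ha => by
                have := (Finset.mem_filter.1 ha).2
                omega
          _ ≤ q * (k - 1) := by
              rw [Finset.sum_const, smul_eq_mul]
              have : (Q.filter (fun a => ¬ k ≤ (L'.filter (fun b => E a b)).card)).card ≤ q := by
                rw [← hQ]; exact Finset.card_le_card (Finset.filter_subset _ _)
              exact Nat.mul_le_mul_right _ this
    have hGsub : G ⊆ (L'.powersetCard k).biUnion
        (fun U => Q.filter (fun a => ∀ b ∈ U, E a b)) := by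
      intro a ha
      rw [hG_def, Finset.mem_filter] at ha
      obtain ⟨U, hU, hUcard⟩ := Finset.exists_subset_card_eq ha.2
      refine Finset.mem_biUnion.2 ⟨U, ?_, ?_⟩
      · exact Finset.mem_powersetCard.2 ⟨hU.trans (Finset.filter_subset _ _), hUcard⟩
      · exact Finset.mem_filter.2 ⟨ha.1, fun b hb => (Finset.mem_filter.1 (hU hb)).2⟩
    have hfiber : ∀ U ∈ L'.powersetCard k,
        (Q.filter (fun a => ∀ b ∈ U, E a b)).card ≤ k - 1 := by
      intro U hU
      by_contra hcon2
      push_neg at hcon2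
      obtain ⟨S, hSsub, hScard⟩ := Finset.exists_subset_card_eq (Nat.le_of_pred_lt hcon2)
      obtain ⟨hUL', hUcard⟩ := Finset.mem_powersetCard.1 hU
      refine hfree ⟨S, hSsub.trans (Finset.filter_subset _ _), U,
        (hUL'.trans hL'L).trans (Finset.filter_subset _ _), hScard, hUcard, ?_⟩
      intro a ha b hb
      exact (Finset.mem_filter.1 (hSsub ha)).2 b hb
    have hGcard : G.card ≤ K₂ := by
      calc G.card ≤ ((L'.powersetCard k).biUnion
            (fun U => Q.filter (fun a => ∀ b ∈ U, E a b))).card := Finset.card_le_card hGsub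
        _ ≤ ∑ U ∈ L'.powersetCard k, (Q.filter (fun a => ∀ b ∈ U, E a b)).card :=
            Finset.card_biUnion_le
        _ ≤ ∑ _U ∈ L'.powersetCard k, (k - 1) := Finset.sum_le_sum hfiber
        _ = (r.choose k) * (k - 1) := by
            rw [Finset.sum_const, Finset.card_powersetCard, hL'card, smul_eq_mul]
        _ = K₂ := by rw [hK_def, Nat.mul_comm]
    -- arithmetic contradiction
    have hfin : (t + 1) * r ≤ K₂ * r + q * (k - 1) := by
      calc (t + 1) * r ≤ ∑ b ∈ L', (nbrA E Q b).card := hlow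
        _ = _ := hswap
        _ ≤ G.card * r + q * (k - 1) := hup
        _ ≤ K₂ * r + q * (k - 1) := by
            exact Nat.add_le_add_right (Nat.mul_le_mul_right _ hGcard) _
    have hqk : q * (k - 1) ≤ c * k * t + c * k := by
      calc q * (k - 1) ≤ (c * t + c) * k := Nat.mul_le_mul hqct (by omega)
        _ = c * k * t + c * k := by ring
    set u : ℕ := c * k * t with hu_def
    set v : ℕ := c * k with hv_def
    have hvpos : 1 ≤ v := by
      have : 1 ≤ k := by omega
      calc 1 = 1 * 1 := rfl
        _ ≤ c * k := Nat.mul_le_mul hcpos this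
    set w : ℕ := v * K₂ with hw_def
    have e1 : (t + 1) * r = 2 * u + 2 * v := by rw [hu_def, hv_def, hr_def]; ring
    have e2 : K₂ * r = 2 * w := by rw [hw_def, hv_def, hr_def]; ring
    have key : 2 * u + 2 * v ≤ 2 * w + (u + v) := by
      calc 2 * u + 2 * v = (t + 1) * r := e1.symm
        _ ≤ K₂ * r + q * (k - 1) := hfin
        _ ≤ 2 * w + (u + v) := by rw [e2]; omega
    have hut : 2 * w + 2 * v ≤ u := by
      have : v * (2 * K₂ + 2) ≤ v * t := Nat.mul_le_mul_left v htK
      calc 2 * w + 2 * v = v * (2 * K₂ + 2) := by rw [hw_def]; ring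
        _ ≤ v * t := this
        _ = u := by rw [hu_def, hv_def]
    omega
  have hLq : L.card < q := hLr.trans_le hq2
  -- Step 2: common neighborhoods of small sets are large
  have hNS : ∀ S : Finset α, S ⊆ Q → S.card ≤ d → q ≤ (commonNbr E B S).card := by
    intro S hSQ hSd
    obtain ⟨T, hST, hTQ, hTcard⟩ := Finset.exists_subsuperset_card_eq hSQ hSd
      (by rw [hQ]; omega)
    refine (hcomm T hTQ hTcard).trans (Finset.card_le_card ?_)
    intro b hb
    simp only [commonNbr, Finset.mem_filter] at hb ⊢
    exact ⟨hb.1, fun a ha => hb.2 a (hST ha)⟩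
  -- witnesses
  have hwit : ∀ S : Finset α, ∃ b : β, S ⊆ Q → S.card ≤ d →
      (b ∈ commonNbr E B S ∧ (nbrA E Q b).card ≤ t) := by
    intro S
    by_cases hS : S ⊆ Q ∧ S.card ≤ d
    · have hq' := hNS S hS.1 hS.2
      have hne : (commonNbr E B S \ L).Nonempty := by
        rw [← Finset.card_pos]
        have h1 := Finset.le_card_sdiff L (commonNbr E B S)
        omega
      obtain ⟨b, hb⟩ := hne
      rw [Finset.mem_sdiff] at hb
      refine ⟨b, fun _ _ => ⟨hb.1, ?_⟩⟩
      have hbB : b ∈ B := Finset.mem_filter.1 hb.1 |>.1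
      have := hb.2
      rw [hL_def, Finset.mem_filter] at this
      push_neg at this
      exact this hbB
    · exact ⟨x, fun h1 h2 => absurd ⟨h1, h2⟩ hS⟩
  choose W hW using hwit
  set D : Finset α → Finset α := fun S => nbrA E Q (W S) \ S with hD_def
  set 𝒮 : Finset (Finset α) := (Finset.range (d + 1)).biUnion (fun s => Q.powersetCard s)
    with h𝒮_def
  set Bad : Finset (Finset α) := (Q.powersetCard (d + 1)).filter
    (fun Z => ∃ S ∈ 𝒮, S ⊆ Z ∧ (Z ∩ D S).Nonempty) with hBad_def
  -- counting filtered supersets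
  have hfilterZ : ∀ A : Finset α, A ⊆ Q →
      ((Q.powersetCard (d + 1)).filter (fun Z => A ⊆ Z)).card
        ≤ q.choose (d + 1 - A.card) := by
    intro A hAQ
    have : ((Q.powersetCard (d + 1)).filter (fun Z => A ⊆ Z)).card
        ≤ (Q.powersetCard (d + 1 - A.card)).card := by
      apply Finset.card_le_card_of_injOn (fun Z => Z \ A)
      · intro Z hZ
        rw [Finset.mem_coe, Finset.mem_filter, Finset.mem_powersetCard] at hZ
        obtain ⟨⟨hZQ, hZc⟩, hAZ⟩ := hZ
        exact Finset.mem_powersetCard.2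
          ⟨(Finset.sdiff_subset).trans hZQ, by rw [Finset.card_sdiff_of_subset hAZ, hZc]⟩
      · intro Z₁ h₁ Z₂ h₂ hEq
        simp only [Finset.coe_filter, Set.mem_setOf_eq] at h₁ h₂
        have hEq' : Z₁ \ A = Z₂ \ A := hEq
        rw [← Finset.sdiff_union_of_subset h₁.2, ← Finset.sdiff_union_of_subset h₂.2, hEq']
    rwa [Finset.card_powersetCard, hQ] at this
  -- bound on each bad piece
  have hBadS : ∀ S : Finset α, S ⊆ Q → S.card ≤ d →
      ((Q.powersetCard (d + 1)).filter (fun Z => S ⊆ Z ∧ (Z ∩ D S).Nonempty)).card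
        ≤ t * q ^ (d - S.card) := by
    intro S hSQ hSd
    have hDsub : D S ⊆ Q := (Finset.sdiff_subset).trans (Finset.filter_subset _ _)
    have hDt : (D S).card ≤ t := by
      calc (D S).card ≤ (nbrA E Q (W S)).card :=
            Finset.card_le_card (Finset.sdiff_subset)
        _ ≤ t := (hW S hSQ hSd).2
    have hsub : (Q.powersetCard (d + 1)).filter (fun Z => S ⊆ Z ∧ (Z ∩ D S).Nonempty)
        ⊆ (D S).biUnion (fun w => (Q.powersetCard (d + 1)).filter (fun Z => insert w S ⊆ Z)) := by
      intro Z hZ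
      rw [Finset.mem_filter] at hZ
      obtain ⟨hZP, hSZ, wv, hwv⟩ := hZ
      rw [Finset.mem_inter] at hwv
      exact Finset.mem_biUnion.2 ⟨wv, hwv.2,
        Finset.mem_filter.2 ⟨hZP, Finset.insert_subset hwv.1 hSZ⟩⟩
    calc ((Q.powersetCard (d + 1)).filter (fun Z => S ⊆ Z ∧ (Z ∩ D S).Nonempty)).card
        ≤ ((D S).biUnion
            (fun w => (Q.powersetCard (d + 1)).filter (fun Z => insert w S ⊆ Z))).card :=
          Finset.card_le_card hsub
      _ ≤ ∑ wv ∈ D S, ((Q.powersetCard (d + 1)).filter (fun Z => insert wv S ⊆ Z)).card :=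
          Finset.card_biUnion_le
      _ ≤ ∑ _wv ∈ D S, q ^ (d - S.card) := by
          refine Finset.sum_le_sum fun wv hwv => ?_
          have hwQ : wv ∈ Q := hDsub hwv
          have hwS : wv ∉ S := (Finset.mem_sdiff.1 hwv).2
          have hcard : (insert wv S).card = S.card + 1 := Finset.card_insert_of_notMem hwS
          calc ((Q.powersetCard (d + 1)).filter (fun Z => insert wv S ⊆ Z)).card
              ≤ q.choose (d + 1 - (insert wv S).card) :=
                hfilterZ _ (Finset.insert_subset hwQ hSQ)
            _ = q.choose (d - S.card) := by rw [hcard]; congr 1; omega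
            _ ≤ q ^ (d - S.card) := Nat.choose_le_pow q _
      _ = (D S).card * q ^ (d - S.card) := by rw [Finset.sum_const, smul_eq_mul]
      _ ≤ t * q ^ (d - S.card) := Nat.mul_le_mul_right _ hDt
  -- total bound on Bad
  have hBadsub : Bad ⊆ (Finset.range (d + 1)).biUnion (fun s => (Q.powersetCard s).biUnion
      (fun S => (Q.powersetCard (d + 1)).filter (fun Z => S ⊆ Z ∧ (Z ∩ D S).Nonempty))) := by
    intro Z hZ
    rw [hBad_def, Finset.mem_filter] at hZ
    obtain ⟨hZP, S, hS𝒮, h1, h2⟩ := hZ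
    rw [h𝒮_def, Finset.mem_biUnion] at hS𝒮
    obtain ⟨s, hs, hSP⟩ := hS𝒮
    exact Finset.mem_biUnion.2 ⟨s, hs, Finset.mem_biUnion.2
      ⟨S, hSP, Finset.mem_filter.2 ⟨hZP, h1, h2⟩⟩⟩
  have hBadcard : Bad.card ≤ (d + 1) * (t * q ^ d) := by
    calc Bad.card ≤ _ := Finset.card_le_card hBadsub
      _ ≤ ∑ s ∈ Finset.range (d + 1), ((Q.powersetCard s).biUnion
          (fun S => (Q.powersetCard (d + 1)).filter
            (fun Z => S ⊆ Z ∧ (Z ∩ D S).Nonempty))).card := Finset.card_biUnion_le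
      _ ≤ ∑ s ∈ Finset.range (d + 1), ∑ S ∈ Q.powersetCard s,
          ((Q.powersetCard (d + 1)).filter (fun Z => S ⊆ Z ∧ (Z ∩ D S).Nonempty)).card :=
          Finset.sum_le_sum fun s _ => Finset.card_biUnion_le
      _ ≤ ∑ s ∈ Finset.range (d + 1), ∑ _S ∈ Q.powersetCard s, (t * q ^ (d - s)) := by
          refine Finset.sum_le_sum fun s hs => Finset.sum_le_sum fun S hS => ?_
          obtain ⟨hSQ, hScard⟩ := Finset.mem_powersetCard.1 hS
          have hsd : s ≤ d := by rw [Finset.mem_range] at hs; omega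
          calc ((Q.powersetCard (d + 1)).filter (fun Z => S ⊆ Z ∧ (Z ∩ D S).Nonempty)).card
              ≤ t * q ^ (d - S.card) := hBadS S hSQ (by omega)
            _ = t * q ^ (d - s) := by rw [hScard]
      _ ≤ ∑ _s ∈ Finset.range (d + 1), (t * q ^ d) := by
          refine Finset.sum_le_sum fun s hs => ?_
          rw [Finset.sum_const, Finset.card_powersetCard, hQ, smul_eq_mul]
          have hsd : s ≤ d := by rw [Finset.mem_range] at hs; omega
          calc q.choose s * (t * q ^ (d - s)) ≤ q ^ s * (t * q ^ (d - s)) :=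
                Nat.mul_le_mul_right _ (Nat.choose_le_pow q s)
            _ = t * (q ^ s * q ^ (d - s)) := by ring
            _ = t * q ^ d := by rw [← pow_add]; congr 2; omega
      _ = (d + 1) * (t * q ^ d) := by rw [Finset.sum_const, Finset.card_range, smul_eq_mul]
  -- the key arithmetic inequality
  have harith : (d + 1) * (t * q ^ d) < q.choose (d + 1) := by
    set X : ℕ := (d + 1) * (Nat.factorial (d + 1)) * 2 ^ (d + 1) with hX_def
    have hXc : 2 * X = c := by rw [hX_def, hc_def]; ring
    have hXpos : 0 < X := by positivity
    have htpos : 1 ≤ t := by omega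
    have hXt : X * t < q := by
      have h2 : 2 * (X * t) ≤ q := by
        calc 2 * (X * t) = (2 * X) * t := by ring
          _ = c * t := by rw [hXc]
          _ ≤ q := hct
      have h3 : 1 ≤ X * t := Nat.mul_le_mul hXpos htpos
      omega
    have h4 : X * t * q ^ d < q ^ (d + 1) := by
      calc X * t * q ^ d < q * q ^ d :=
            (Nat.mul_lt_mul_right (pow_pos hqpos d)).2 hXt
        _ = q ^ (d + 1) := by ring
    have h5 : q ^ (d + 1) ≤ 2 ^ (d + 1) * (q - d) ^ (d + 1) := by
      calc q ^ (d + 1) ≤ (2 * (q - d)) ^ (d + 1) := Nat.pow_le_pow_left (by omega) _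
        _ = 2 ^ (d + 1) * (q - d) ^ (d + 1) := by rw [Nat.mul_pow]
    have h6 : (q - d) ^ (d + 1) ≤ q.descFactorial (d + 1) := by
      have := aux_pow_le_descFactorial q (d + 1)
      have he : q + 1 - (d + 1) = q - d := by omega
      rwa [he] at this
    have h7 : q.descFactorial (d + 1) = (Nat.factorial (d + 1)) * q.choose (d + 1) :=
      Nat.descFactorial_eq_factorial_mul_choose q (d + 1)
    have h8 : X * t * q ^ d < 2 ^ (d + 1) * ((Nat.factorial (d + 1)) * q.choose (d + 1)) := by
      calc X * t * q ^ d < q ^ (d + 1) := h4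
        _ ≤ 2 ^ (d + 1) * (q - d) ^ (d + 1) := h5
        _ ≤ 2 ^ (d + 1) * q.descFactorial (d + 1) := Nat.mul_le_mul_left _ h6
        _ = 2 ^ (d + 1) * ((Nat.factorial (d + 1)) * q.choose (d + 1)) := by rw [h7]
    have h9 : (2 ^ (d + 1) * (Nat.factorial (d + 1))) * ((d + 1) * (t * q ^ d))
        < (2 ^ (d + 1) * (Nat.factorial (d + 1))) * q.choose (d + 1) := by
      calc (2 ^ (d + 1) * (Nat.factorial (d + 1))) * ((d + 1) * (t * q ^ d)) = X * t * q ^ d := by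
            rw [hX_def]; ring
        _ < 2 ^ (d + 1) * ((Nat.factorial (d + 1)) * q.choose (d + 1)) := h8
        _ = (2 ^ (d + 1) * (Nat.factorial (d + 1))) * q.choose (d + 1) := by ring
    exact Nat.lt_of_mul_lt_mul_left h9
  -- find a good Z
  have hBadP : Bad ⊆ Q.powersetCard (d + 1) := Finset.filter_subset _ _
  have hcards : Bad.card < (Q.powersetCard (d + 1)).card := by
    rw [Finset.card_powersetCard, hQ]
    exact lt_of_le_of_lt hBadcard harith
  have hgood : (Q.powersetCard (d + 1) \ Bad).Nonempty := by
    rw [← Finset.card_pos, Finset.card_sdiff_of_subset hBadP]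
    omega
  obtain ⟨Z, hZ⟩ := hgood
  rw [Finset.mem_sdiff] at hZ
  obtain ⟨hZP, hZnB⟩ := hZ
  obtain ⟨hZQ, hZcard⟩ := Finset.mem_powersetCard.1 hZP
  refine ⟨Z, hZQ, hZcard, ?_⟩
  intro S hSZ
  by_cases hSeq : S = Z
  · refine ⟨x, hxB, ?_⟩
    have hnx : nbrA E Q x = Q := by
      rw [nbrA]
      exact Finset.filter_true_of_mem hxadj
    rw [hnx, hSeq, Finset.inter_eq_right.2 hZQ]
  · have hSssub : S ⊂ Z := Finset.ssubset_iff_subset_ne.2 ⟨hSZ, hSeq⟩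
    have hSlt := Finset.card_lt_card hSssub
    have hScard : S.card ≤ d := by omega
    have hSQ : S ⊆ Q := hSZ.trans hZQ
    have hS𝒮 : S ∈ 𝒮 := by
      rw [h𝒮_def]
      exact Finset.mem_biUnion.2 ⟨S.card, Finset.mem_range.2 (by omega),
        Finset.mem_powersetCard.2 ⟨hSQ, rfl⟩⟩
    have hempty : Z ∩ D S = ∅ := by
      by_contra hne'
      exact hZnB (Finset.mem_filter.2 ⟨hZP, S, hS𝒮, hSZ,
        Finset.nonempty_iff_ne_empty.2 hne'⟩)
    obtain ⟨hWmem, _⟩ := hW S hSQ hScard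
    refine ⟨W S, (Finset.mem_filter.1 hWmem).1, ?_⟩
    apply Finset.Subset.antisymm
    · intro a ha
      rw [Finset.mem_inter] at ha
      by_contra haS
      have hmem : a ∈ Z ∩ D S := Finset.mem_inter.2 ⟨ha.2,
        Finset.mem_sdiff.2 ⟨ha.1, haS⟩⟩
      rw [hempty] at hmem
      exact absurd hmem (Finset.notMem_empty a)
    · intro a haS
      refine Finset.mem_inter.2 ⟨?_, hSZ haS⟩
      have hE : E a (W S) := (Finset.mem_filter.1 hWmem).2 a haS
      rw [nbrA]
      exact Finset.mem_filter.2 ⟨hSQ haS, hE⟩
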